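/- The map R : Σ → Σ defined by (R ψ)(i) = (C^[i] ψ)(0) (the first coordinate of the i-th iterate of C at ψ, with C^[0] the identity) is a homeomorphism of Σ satisfying S ∘ R = R ∘ C; hence the shift S and the map C are topologically conjugate. -/
import Mathlib


/-- The map `C` on the symbolic space `Σ = ℕ → Bool`. -/
def Cmap : (ℕ → Bool) → (ℕ → Bool) := fun ψ i => xor (ψ 0) (ψ (i + 1))

/-- The shift map `S` on the symbolic space. -/
def Smap : (ℕ → Bool) → (ℕ → Bool) := fun ψ i => ψ (i + 1)

/-- The map `R` whose `i`-th coordinate is the first coordinate of the `i`-th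
iterate of `C`. -/
def Rmap : (ℕ → Bool) → (ℕ → Bool) := fun ψ i => (Cmap^[i] ψ) 0

private lemma xor_aux (a b c : Bool) : xor (xor a b) (xor a c) = xor b c := by
  cases a <;> cases b <;> cases c <;> rfl

private lemma xor_aux2 (a b : Bool) : xor a (xor a b) = b := by
  cases a <;> cases b <;> rfl

lemma Cmap_iter (i : ℕ) : ∀ ψ j, Cmap^[i+1] ψ j = xor (ψ i) (ψ (i + j + 1)) := by
  induction i with
  | zero => intro ψ j; simp [Function.iterate_one]; rfl
  | succ i ih =>
    intro ψ j
    rw [Function.iterate_succ_apply, ih]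
    show xor (xor (ψ 0) (ψ (i+1))) (xor (ψ 0) (ψ (i + j + 1 + 1))) = _
    rw [xor_aux]
    congr 2
    omega

lemma Rmap_zero (ψ : ℕ → Bool) : Rmap ψ 0 = ψ 0 := rfl

lemma Rmap_succ (ψ : ℕ → Bool) (i : ℕ) : Rmap ψ (i+1) = xor (ψ i) (ψ (i+1)) := by
  show Cmap^[i+1] ψ 0 = _
  rw [Cmap_iter]

/-- The inverse of `Rmap`: prefix xor. -/
def Qmap (φ : ℕ → Bool) : ℕ → Bool
  | 0 => φ 0
  | (i+1) => xor (Qmap φ i) (φ (i+1))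

lemma left_inv : ∀ ψ, Qmap (Rmap ψ) = ψ := by
  intro ψ
  funext i
  induction i with
  | zero => rfl
  | succ i ih =>
    show xor (Qmap (Rmap ψ) i) (Rmap ψ (i+1)) = ψ (i+1)
    rw [ih, Rmap_succ, xor_aux2]

lemma right_inv : ∀ φ, Rmap (Qmap φ) = φ := by
  intro φ
  funext i
  cases i with
  | zero => rfl
  | succ i =>
    rw [Rmap_succ]
    show xor (Qmap φ i) (xor (Qmap φ i) (φ (i+1))) = φ (i+1)
    rw [xor_aux2]

lemma cont_xor_coords {X : Type*} [TopologicalSpace X] {f g : X → Bool}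
    (hf : Continuous f) (hg : Continuous g) : Continuous (fun x => xor (f x) (g x)) := by
  exact (continuous_of_discreteTopology (f := fun p : Bool × Bool => xor p.1 p.2)).comp
    (hf.prodMk hg)

lemma Rmap_continuous : Continuous Rmap := by
  apply continuous_pi
  intro i
  cases i with
  | zero => exact continuous_apply 0
  | succ i =>
    simp only [Rmap_succ]
    exact cont_xor_coords (continuous_apply i) (continuous_apply (i+1))

lemma Qmap_continuous : Continuous Qmap := by
  apply continuous_pi
  intro i
  induction i with
  | zero => exact continuous_apply 0
  | succ i ih =>
    show Continuous fun φ => xor (Qmap φ i) (φ (i+1))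
    exact cont_xor_coords ih (continuous_apply (i+1))

/-- `R` is a homeomorphism of the symbolic space (product
topology, `Bool` discrete) satisfying `S ∘ R = R ∘ C`; hence the shift `S` and
the map `C` are topologically conjugate. -/
theorem stmt11 : IsHomeomorph Rmap ∧ Smap ∘ Rmap = Rmap ∘ Cmap := by
  constructor
  · exact (Homeomorph.mk ⟨Rmap, Qmap, left_inv, right_inv⟩
      Rmap_continuous Qmap_continuous).isHomeomorph
  · funext ψ i
    show Rmap ψ (i+1) = Cmap^[i] (Cmap ψ) 0
    rw [← Function.iterate_succ_apply]
    rfl
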